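/- Define b_n = -(1/ln n) * ln(n^(1/n)/(n+1)^(1/(n+1)) - 1) for n ≥ 3. Then b_n → 2 as n → ∞; more precisely, b_n = 2 - (ln ln n)/(ln n) + o((ln ln n)/(ln n)). -/

import Mathlib

open Filter Real Asymptotics

noncomputable def b (n : ℕ) : ℝ :=
  -(1 / Real.log n) *
    Real.log ((n : ℝ) ^ ((1 : ℝ) / n) / ((n : ℝ) + 1) ^ ((1 : ℝ) / (n + 1)) - 1)

theorem stmt_11 :
    Tendsto b atTop (nhds 2) ∧
      (fun n : ℕ => b n - (2 - Real.log (Real.log n) / Real.log n)) =o[atTop]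
        (fun n : ℕ => Real.log (Real.log n) / Real.log n) := by
  set d : ℕ → ℝ := fun n => Real.log n / n - Real.log ((n:ℝ)+1) / ((n:ℝ)+1) with hddef
  set e : ℕ → ℝ := fun n =>
    Real.log ((Real.exp (d n) - 1) * (n:ℝ)^2 / Real.log n) with hedef
  have h3 : ∀ n : ℕ, 3 ≤ n → (3:ℝ) ≤ (n:ℝ) := fun n hn => by exact_mod_cast hn
  have hL1 : ∀ n : ℕ, 3 ≤ n → 1 < Real.log n := by
    intro n hn
    have h3n := h3 n hn
    rw [Real.lt_log_iff_exp_lt (by linarith)]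
    calc Real.exp 1 < 2.7182818286 := Real.exp_one_lt_d9
      _ < 3 := by norm_num
      _ ≤ n := h3n
  have hlog : ∀ n : ℕ, 3 ≤ n →
      Real.log ((n:ℝ)+1) = Real.log n + Real.log (1 + 1/(n:ℝ)) := by
    intro n hn
    have hn0 : (0:ℝ) < n := by have := h3 n hn; linarith
    rw [← Real.log_mul (ne_of_gt hn0) (by positivity)]
    congr 1
    field_simp
  have hs : ∀ n : ℕ, 3 ≤ n → (n:ℝ) * Real.log (1 + 1/(n:ℝ)) < 1 := by
    intro n hn
    have hn0 : (0:ℝ) < n := by have := h3 n hn; linarith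
    have hinv : (0:ℝ) < 1/(n:ℝ) := by positivity
    have hx : Real.log (1 + 1/(n:ℝ)) < 1/(n:ℝ) := by
      have := Real.log_lt_sub_one_of_pos (show (0:ℝ) < 1 + 1/(n:ℝ) by linarith)
        (by linarith)
      linarith
    have := mul_lt_mul_of_pos_left hx hn0
    rwa [mul_one_div, div_self (ne_of_gt hn0)] at this
  have hdpos : ∀ n : ℕ, 3 ≤ n → 0 < d n := by
    intro n hn
    have hn0 : (0:ℝ) < n := by have := h3 n hn; linarith
    have hL := hL1 n hn
    have hs' := hs n hn
    simp only [hddef]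
    rw [hlog n hn, sub_pos, div_lt_div_iff₀ (by linarith) hn0]
    nlinarith
  -- d tends to 0
  have hlogdiv : Tendsto (fun x:ℝ => Real.log x / x) atTop (nhds 0) :=
    Real.isLittleO_log_id_atTop.tendsto_div_nhds_zero
  have hdt1 : Tendsto (fun n:ℕ => Real.log n / (n:ℝ)) atTop (nhds 0) :=
    hlogdiv.comp tendsto_natCast_atTop_atTop
  have hdt2 : Tendsto (fun n:ℕ => Real.log ((n:ℝ)+1) / ((n:ℝ)+1)) atTop (nhds 0) :=
    hlogdiv.comp (tendsto_atTop_add_const_right atTop 1 tendsto_natCast_atTop_atTop)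
  have hd0 : Tendsto d atTop (nhds 0) := by
    have := hdt1.sub hdt2
    simpa using this
  -- slope of exp at 0
  have hslope : Tendsto (fun x:ℝ => (Real.exp x - 1)/x) (nhdsWithin (0:ℝ) {(0:ℝ)}ᶜ) (nhds 1) := by
    have h := (Real.hasDerivAt_exp 0)
    rw [hasDerivAt_iff_tendsto_slope] at h
    simp only [Real.exp_zero] at h
    refine Tendsto.congr ?_ h
    intro x
    rw [slope_def_field, Real.exp_zero]
    ring
  have hdne : ∀ᶠ n : ℕ in atTop, d n ≠ 0 := by
    filter_upwards [eventually_ge_atTop 3] with n hn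
    exact ne_of_gt (hdpos n hn)
  have hdin : Tendsto d atTop (nhdsWithin (0:ℝ) {(0:ℝ)}ᶜ) := by
    refine tendsto_nhdsWithin_of_tendsto_nhds_of_eventually_within d hd0 ?_
    filter_upwards [hdne] with n hn
    simpa using hn
  have hD : Tendsto (fun n:ℕ => (Real.exp (d n) - 1) / d n) atTop (nhds 1) :=
    hslope.comp hdin
  -- d n * n^2 / log n → 1
  have hu : Tendsto (fun n:ℕ => (n:ℝ) * Real.log (1 + 1/(n:ℝ))) atTop (nhds 1) := by
    have := (Real.tendsto_mul_log_one_add_div_atTop 1).comp tendsto_natCast_atTop_atTop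
    simpa [Function.comp_def] using this
  have hLtop : Tendsto (fun n:ℕ => Real.log n) atTop atTop :=
    Real.tendsto_log_atTop.comp tendsto_natCast_atTop_atTop
  have huL : Tendsto (fun n:ℕ => ((n:ℝ) * Real.log (1 + 1/(n:ℝ))) / Real.log n)
      atTop (nhds 0) := hu.div_atTop hLtop
  have hfrac : Tendsto (fun n:ℕ => (n:ℝ)/((n:ℝ)+1)) atTop (nhds 1) :=
    tendsto_natCast_div_add_atTop 1
  have hC : Tendsto (fun n:ℕ => d n * (n:ℝ)^2 / Real.log n) atTop (nhds 1) := by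
    have hmain : Tendsto
        (fun n:ℕ => (1 - ((n:ℝ) * Real.log (1 + 1/(n:ℝ))) / Real.log n) * ((n:ℝ)/((n:ℝ)+1)))
        atTop (nhds 1) := by
      have := ((tendsto_const_nhds (x := (1:ℝ)) (f := atTop)).sub huL).mul hfrac
      simpa using this
    refine Tendsto.congr' ?_ hmain
    filter_upwards [eventually_ge_atTop 3] with n hn
    have hn0 : (0:ℝ) < n := by have := h3 n hn; linarith
    have hL := hL1 n hn
    have hLne : Real.log n ≠ 0 := by linarith
    simp only [hddef]
    rw [hlog n hn]
    field_simp
    ring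
  -- t n → 1
  have hE : Tendsto (fun n:ℕ => (Real.exp (d n) - 1) * (n:ℝ)^2 / Real.log n)
      atTop (nhds 1) := by
    have hmul := hD.mul hC
    rw [one_mul] at hmul
    refine Tendsto.congr' ?_ hmul
    filter_upwards [eventually_ge_atTop 3] with n hn
    have hn0 : (0:ℝ) < n := by have := h3 n hn; linarith
    have hL := hL1 n hn
    have hLne : Real.log n ≠ 0 := by linarith
    have hdne' : d n ≠ 0 := ne_of_gt (hdpos n hn)
    field_simp
  have hF : Tendsto e atTop (nhds 0) := by
    have := (Real.continuousAt_log (by norm_num : (1:ℝ) ≠ 0)).tendsto.comp hE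
    simpa [hedef, Function.comp_def] using this
  -- the key identity
  have hid : ∀ n : ℕ, 3 ≤ n →
      b n - (2 - Real.log (Real.log n) / Real.log n) = -(e n) / Real.log n := by
    intro n hn
    have hn0 : (0:ℝ) < n := by have := h3 n hn; linarith
    have hL := hL1 n hn
    have hLpos : 0 < Real.log n := by linarith
    have hr1 : (n:ℝ) ^ ((1:ℝ)/n) = Real.exp (Real.log n / n) := by
      rw [Real.rpow_def_of_pos hn0]; congr 1; ring
    have hr2 : ((n:ℝ)+1) ^ ((1:ℝ)/((n:ℝ)+1)) = Real.exp (Real.log ((n:ℝ)+1) / ((n:ℝ)+1)) := by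
      rw [Real.rpow_def_of_pos (by linarith)]; congr 1; ring
    have hratio : (n:ℝ) ^ ((1:ℝ)/n) / ((n:ℝ)+1) ^ ((1:ℝ)/((n:ℝ)+1)) = Real.exp (d n) := by
      rw [hr1, hr2, ← Real.exp_sub]
    have htpos : 0 < Real.exp (d n) - 1 := by
      have h1 : Real.exp 0 < Real.exp (d n) := Real.exp_lt_exp.mpr (hdpos n hn)
      rw [Real.exp_zero] at h1
      linarith
    have hTpos : 0 < (Real.exp (d n) - 1) * (n:ℝ)^2 / Real.log n :=
      div_pos (mul_pos htpos (by positivity)) hLpos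
    have key : Real.log (Real.exp (d n) - 1)
        = e n + Real.log (Real.log n) - 2 * Real.log n := by
      have heq : Real.exp (d n) - 1
          = ((Real.exp (d n) - 1) * (n:ℝ)^2 / Real.log n) * Real.log n / (n:ℝ)^2 := by
        field_simp
      rw [heq, Real.log_div (by positivity) (by positivity),
        Real.log_mul (ne_of_gt hTpos) (ne_of_gt hLpos), Real.log_pow]
      simp only [hedef]
      push_cast
      ring
    show -(1 / Real.log n) *
        Real.log ((n : ℝ) ^ ((1 : ℝ) / n) / ((n : ℝ) + 1) ^ ((1 : ℝ) / ((n:ℝ) + 1)) - 1)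
        - (2 - Real.log (Real.log n) / Real.log n) = -(e n) / Real.log n
    rw [hratio, key]
    field_simp
    try ring
  -- little-o part
  have hlogLtop : Tendsto (fun n:ℕ => Real.log (Real.log n)) atTop atTop :=
    Real.tendsto_log_atTop.comp hLtop
  have hO : (fun n : ℕ => b n - (2 - Real.log (Real.log n) / Real.log n)) =o[atTop]
      (fun n : ℕ => Real.log (Real.log n) / Real.log n) := by
    rw [isLittleO_iff]
    intro c hc
    have he : ∀ᶠ n : ℕ in atTop, |e n| ≤ c := by
      have := Metric.tendsto_nhds.mp hF c hc
      filter_upwards [this] with n hn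
      rw [Real.dist_eq, sub_zero] at hn
      exact le_of_lt hn
    filter_upwards [eventually_ge_atTop 3, he, hlogLtop.eventually_ge_atTop 1]
      with n hn he1 hl1
    rw [hid n hn]
    have hLpos : 0 < Real.log n := lt_trans one_pos (hL1 n hn)
    rw [Real.norm_eq_abs, Real.norm_eq_abs, abs_div, abs_div, abs_neg,
      abs_of_pos hLpos, abs_of_pos (by linarith : (0:ℝ) < Real.log (Real.log n)),
      ← mul_div_assoc]
    exact div_le_div_of_nonneg_right
      (le_trans he1 (le_mul_of_one_le_right hc.le hl1)) hLpos.le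
  refine ⟨?_, hO⟩
  have hX : Tendsto (fun n:ℕ => Real.log (Real.log n) / Real.log n) atTop (nhds 0) :=
    hlogdiv.comp hLtop
  have h2 : Tendsto (fun n:ℕ => b n - (2 - Real.log (Real.log n) / Real.log n))
      atTop (nhds 0) := hO.isBigO.trans_tendsto hX
  have h4 : Tendsto (fun n:ℕ => (2:ℝ) - Real.log (Real.log n) / Real.log n)
      atTop (nhds 2) := by
    have := (tendsto_const_nhds (x := (2:ℝ)) (f := atTop (α := ℕ))).sub hX
    simpa using this
  have := h2.add h4
  rw [zero_add] at this
  refine Tendsto.congr ?_ this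
  intro n; ring
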